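/- For positive invertible operators A, B and p ∈ (0,1), the Furuta parametric relative operator entropy satisfies Sₚ(A|B) = −S(A♯ₚB | A)/p = S(A♯ₚB | B)/(1−p). -/

import Mathlib

open scoped Real

variable {H : Type*} [NormedAddCommGroup H] [InnerProductSpace ℂ H] [CompleteSpace H]

/-- Square root via continuous functional calculus. -/
noncomputable def opSqrt (A : H →L[ℂ] H) : H →L[ℂ] H := cfc Real.sqrt A

/-- Real power via continuous functional calculus. -/
noncomputable def opRpow (A : H →L[ℂ] H) (p : ℝ) : H →L[ℂ] H :=
  cfc (fun x : ℝ => x ^ p) A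

/-- Logarithm via continuous functional calculus. -/
noncomputable def opLog (A : H →L[ℂ] H) : H →L[ℂ] H := cfc Real.log A

/-- Operator inverse (junk value `0` if not invertible). -/
noncomputable def opInv (A : H →L[ℂ] H) : H →L[ℂ] H := Ring.inverse A

/-- `A^{-1/2}`. -/
noncomputable def opInvSqrt (A : H →L[ℂ] H) : H →L[ℂ] H := opInv (opSqrt A)

/-- Weighted arithmetic mean `A ∇ₚ B`. -/
noncomputable def wNabla (p : ℝ) (A B : H →L[ℂ] H) : H →L[ℂ] H := (1 - p) • A + p • B

/-- Weighted harmonic mean `A !ₚ B`. -/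
noncomputable def wHarm (p : ℝ) (A B : H →L[ℂ] H) : H →L[ℂ] H :=
  opInv ((1 - p) • opInv A + p • opInv B)

/-- Weighted geometric mean `A ♯ₚ B`. -/
noncomputable def wGeom (p : ℝ) (A B : H →L[ℂ] H) : H →L[ℂ] H :=
  opSqrt A * opRpow (opInvSqrt A * B * opInvSqrt A) p * opSqrt A

/-- Relative operator entropy `S(A|B)`. -/
noncomputable def relEntropy (A B : H →L[ℂ] H) : H →L[ℂ] H :=
  opSqrt A * opLog (opInvSqrt A * B * opInvSqrt A) * opSqrt A

/-- Furuta parametric relative operator entropy `Sₚ(A|B)`. -/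
noncomputable def furutaEntropy (p : ℝ) (A B : H →L[ℂ] H) : H →L[ℂ] H :=
  opSqrt A * (opRpow (opInvSqrt A * B * opInvSqrt A) p *
    opLog (opInvSqrt A * B * opInvSqrt A)) * opSqrt A

/-- Tsallis relative operator entropy `Tₚ(A|B)`. -/
noncomputable def tsallisEntropy (p : ℝ) (A B : H →L[ℂ] H) : H →L[ℂ] H :=
  p⁻¹ • (wGeom p A B - A)


section Aux

variable {A : Type*} [Ring A]

/-- uniqueness of `Ring.inverse`. -/
lemma myRingInverse_eq {M : Type*} [MonoidWithZero M] {a b : M}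
    (h1 : a * b = 1) (h2 : b * a = 1) : Ring.inverse a = b := by
  have : Ring.inverse ((⟨a, b, h1, h2⟩ : Mˣ) : M) = b := by
    rw [Ring.inverse_unit]; rfl
  exact this

lemma myInverse_mul_rev {M : Type*} [MonoidWithZero M] {a b : M}
    (ha : IsUnit a) (hb : IsUnit b) :
    Ring.inverse (a * b) = Ring.inverse b * Ring.inverse a := by
  refine myRingInverse_eq ?_ ?_
  · calc a * b * (Ring.inverse b * Ring.inverse a)
        = a * (b * Ring.inverse b) * Ring.inverse a := by simp [mul_assoc]
      _ = 1 := by rw [Ring.mul_inverse_cancel b hb, mul_one, Ring.mul_inverse_cancel a ha]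
  · calc Ring.inverse b * Ring.inverse a * (a * b)
        = Ring.inverse b * (Ring.inverse a * a) * b := by simp [mul_assoc]
      _ = 1 := by rw [Ring.inverse_mul_cancel a ha, mul_one, Ring.inverse_mul_cancel b hb]

end Aux

namespace FurutaAux

variable {x : H →L[ℂ] H}

lemma spec_pos (hx : 0 ≤ x) (hu : IsUnit x) : spectrum ℝ x ⊆ Set.Ioi 0 := by
  intro t ht
  have h1 : 0 ≤ t := spectrum_nonneg_of_nonneg hx ht
  have h2 : t ≠ 0 := by
    rintro rfl
    exact (spectrum.zero_notMem_iff ℝ).mpr hu ht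
  exact lt_of_le_of_ne h1 (Ne.symm h2)

lemma contOn_rpow {s : Set ℝ} (hs : s ⊆ Set.Ioi 0) (r : ℝ) :
    ContinuousOn (fun t : ℝ => t ^ r) s := fun t ht =>
  (Real.continuousAt_rpow_const t r (Or.inl (hs ht).ne')).continuousWithinAt

lemma contOn_log {s : Set ℝ} (hs : s ⊆ Set.Ioi 0) : ContinuousOn Real.log s := fun t ht =>
  (Real.continuousAt_log (hs ht).ne').continuousWithinAt

section sqrt

variable (hx : 0 ≤ x) (hu : IsUnit x)
include hx

lemma sqrt_nonneg : 0 ≤ cfc Real.sqrt x :=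
  cfc_nonneg fun t _ => Real.sqrt_nonneg t

lemma sqrt_mul_self : cfc Real.sqrt x * cfc Real.sqrt x = x := by
  rw [← cfc_mul ..]
  conv_rhs => rw [← cfc_id ℝ x hx.isSelfAdjoint]
  exact cfc_congr fun t ht => Real.mul_self_sqrt (spectrum_nonneg_of_nonneg hx ht)

include hu in
lemma sqrt_isUnit : IsUnit (cfc Real.sqrt x) := by
  rw [← spectrum.zero_notMem_iff ℝ]
  rw [cfc_map_spectrum Real.sqrt x hx.isSelfAdjoint Real.continuous_sqrt.continuousOn]
  rintro ⟨t, ht, ht0⟩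
  have := spec_pos hx hu ht
  exact (Real.sqrt_ne_zero'.mpr this) ht0

end sqrt

section rpow

variable (hx : 0 ≤ x) (hu : IsUnit x)
include hx hu

lemma rpow_mul_rpow (r s : ℝ) :
    cfc (fun t : ℝ => t ^ r) x * cfc (fun t : ℝ => t ^ s) x
      = cfc (fun t : ℝ => t ^ (r + s)) x := by
  have hsp := spec_pos hx hu
  rw [← cfc_mul (fun t : ℝ => t ^ r) (fun t : ℝ => t ^ s) x (contOn_rpow hsp r) (contOn_rpow hsp s)]
  exact cfc_congr fun t ht => (Real.rpow_add (hsp ht) r s).symm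

lemma rpow_zero' : cfc (fun t : ℝ => t ^ (0:ℝ)) x = 1 := by
  rw [← cfc_const_one ℝ x hx.isSelfAdjoint]
  exact cfc_congr fun t _ => Real.rpow_zero t

lemma rpow_inverse (r : ℝ) :
    Ring.inverse (cfc (fun t : ℝ => t ^ r) x) = cfc (fun t : ℝ => t ^ (-r)) x := by
  refine myRingInverse_eq ?_ ?_
  · rw [rpow_mul_rpow hx hu r (-r), add_neg_cancel, rpow_zero' hx hu]
  · rw [rpow_mul_rpow hx hu (-r) r, neg_add_cancel, rpow_zero' hx hu]

lemma rpow_isUnit (r : ℝ) : IsUnit (cfc (fun t : ℝ => t ^ r) x) := by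
  have h1 : cfc (fun t : ℝ => t ^ r) x * cfc (fun t : ℝ => t ^ (-r)) x = 1 := by
    rw [rpow_mul_rpow hx hu r (-r), add_neg_cancel, rpow_zero' hx hu]
  have h2 : cfc (fun t : ℝ => t ^ (-r)) x * cfc (fun t : ℝ => t ^ r) x = 1 := by
    rw [rpow_mul_rpow hx hu (-r) r, neg_add_cancel, rpow_zero' hx hu]
  exact ⟨⟨_, _, h1, h2⟩, rfl⟩

lemma rpow_nonneg' (r : ℝ) : 0 ≤ cfc (fun t : ℝ => t ^ r) x := by
  have hsp := spec_pos hx hu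
  exact cfc_nonneg fun t ht => Real.rpow_nonneg (hsp ht).le r

lemma log_rpow (r : ℝ) :
    cfc Real.log (cfc (fun t : ℝ => t ^ r) x) = r • cfc Real.log x := by
  have hsp := spec_pos hx hu
  have himg : (fun t : ℝ => t ^ r) '' spectrum ℝ x ⊆ Set.Ioi 0 := by
    rintro - ⟨t, ht, rfl⟩
    exact Real.rpow_pos_of_pos (hsp ht) r
  rw [← cfc_comp Real.log (fun t : ℝ => t ^ r) x hx.isSelfAdjoint
    (contOn_log himg) (contOn_rpow hsp r)]
  have : cfc (Real.log ∘ fun t : ℝ => t ^ r) x = cfc (fun t : ℝ => r * Real.log t) x :=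
    cfc_congr fun t ht => by simp [Real.log_rpow (hsp ht)]
  rw [this, cfc_const_mul r Real.log x (contOn_log hsp)]


lemma rpow_mul_self_mul_rpow (r s : ℝ) :
    cfc (fun t : ℝ => t ^ r) x * x * cfc (fun t : ℝ => t ^ s) x
      = cfc (fun t : ℝ => t ^ (r + 1 + s)) x := by
  have hsp := spec_pos hx hu
  have h1 : cfc (fun t : ℝ => t ^ r) x * x = cfc (fun t : ℝ => t ^ r * t) x := by
    rw [cfc_mul (fun t : ℝ => t ^ r) (fun t : ℝ => t) x (contOn_rpow hsp r) continuousOn_id,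
      cfc_id' ℝ x hx.isSelfAdjoint]
  rw [h1, ← cfc_mul (fun t : ℝ => t ^ r * t) (fun t : ℝ => t ^ s) x
    (fun t ht => ((contOn_rpow hsp r t ht).mul (continuousWithinAt_id))) (contOn_rpow hsp s)]
  refine cfc_congr fun t ht => ?_
  have htp := hsp ht
  rw [Real.rpow_add htp, Real.rpow_add htp, Real.rpow_one]

lemma rpow_mul_log_mul_rpow (r s : ℝ) :
    cfc (fun t : ℝ => t ^ r) x * cfc Real.log x * cfc (fun t : ℝ => t ^ s) x
      = cfc (fun t : ℝ => t ^ (r + s) * Real.log t) x := by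
  have hsp := spec_pos hx hu
  have h1 : cfc (fun t : ℝ => t ^ r) x * cfc Real.log x
      = cfc (fun t : ℝ => t ^ r * Real.log t) x := by
    rw [cfc_mul _ _ x (contOn_rpow hsp r) (contOn_log hsp)]
  rw [h1, ← cfc_mul (fun t : ℝ => t ^ r * Real.log t) (fun t : ℝ => t ^ s) x
    ((contOn_rpow hsp r).mul (contOn_log hsp)) (contOn_rpow hsp s)]
  refine cfc_congr fun t ht => ?_
  have htp := hsp ht
  rw [Real.rpow_add htp]
  ring

end rpow

section conj

noncomputable def conjSAH (u : unitary (H →L[ℂ] H)) : (H →L[ℂ] H) →⋆ₐ[ℂ] (H →L[ℂ] H) where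
  toFun x := (u : H →L[ℂ] H) * x * star (u : H →L[ℂ] H)
  map_one' := by simpa using Unitary.coe_mul_star_self u
  map_mul' x y := by
    have h : star (u : H →L[ℂ] H) * u = 1 := Unitary.coe_star_mul_self u
    calc (u : H →L[ℂ] H) * (x * y) * star (u : H →L[ℂ] H)
        = (u : H →L[ℂ] H) * x * (star (u : H →L[ℂ] H) * u) * y * star (u : H →L[ℂ] H) := by
          rw [h]; simp [mul_assoc]
      _ = _ := by simp only [mul_assoc]
  map_zero' := by simp
  map_add' x y := by simp [mul_add, add_mul]
  commutes' r := by
    simp only [Algebra.algebraMap_eq_smul_one]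
    rw [mul_smul_comm, mul_one, smul_mul_assoc, Unitary.mul_star_self_of_mem u.2]
  map_star' x := by simp [mul_assoc]

lemma conjSAH_cont (u : unitary (H →L[ℂ] H)) : Continuous (conjSAH u) :=
  (continuous_const.mul continuous_id).mul continuous_const

lemma cfc_conj {u : H →L[ℂ] H} (hu : u ∈ unitary (H →L[ℂ] H)) (x : H →L[ℂ] H)
    (hx : IsSelfAdjoint x) (f : ℝ → ℝ) (hf : ContinuousOn f (spectrum ℝ x)) :
    cfc f (u * x * star u) = u * cfc f x * star u := by
  have h1 : IsSelfAdjoint (u * x * star u) := by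
    rw [IsSelfAdjoint, star_mul, star_mul, star_star, hx.star_eq, mul_assoc]
  have := StarAlgHomClass.map_cfc (conjSAH ⟨u, hu⟩) f x hf (conjSAH_cont _) hx h1
  simpa [conjSAH] using this.symm

end conj

end FurutaAux


/-- `Sₚ(A|B) = −S(A♯ₚB|A)/p = S(A♯ₚB|B)/(1−p)` for positive invertible
`A, B` and `p ∈ (0,1)`. -/
theorem furutaEntropy_eq_relEntropy_geom (A B : H →L[ℂ] H) (hA : 0 ≤ A)
    (hA' : IsUnit A) (hB : 0 ≤ B) (hB' : IsUnit B) (p : ℝ)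
    (hp : p ∈ Set.Ioo (0:ℝ) 1) :
    furutaEntropy p A B = -(p⁻¹ • relEntropy (wGeom p A B) A) ∧
      furutaEntropy p A B = (1 - p)⁻¹ • relEntropy (wGeom p A B) B := by
  obtain ⟨hp0, hp1⟩ := hp
  simp only [furutaEntropy, relEntropy, wGeom, opSqrt, opRpow, opLog, opInv, opInvSqrt]
  set a : H →L[ℂ] H := cfc Real.sqrt A with ha_def
  have ha_sa : IsSelfAdjoint a := cfc_predicate _ A
  have ha_nn : 0 ≤ a := FurutaAux.sqrt_nonneg hA
  have ha_u : IsUnit a := FurutaAux.sqrt_isUnit hA hA'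
  have haa : a * a = A := FurutaAux.sqrt_mul_self hA
  set ai : H →L[ℂ] H := Ring.inverse a with hai_def
  have hai_sa : IsSelfAdjoint ai := by
    rw [hai_def, IsSelfAdjoint, ← Ring.inverse_star, ha_sa.star_eq]
  have hai_u : IsUnit ai := isUnit_ringInverse.mpr ha_u
  have h_ai_a : ai * a = 1 := Ring.inverse_mul_cancel a ha_u
  have h_a_ai : a * ai = 1 := Ring.mul_inverse_cancel a ha_u
  set C : H →L[ℂ] H := ai * B * ai with hC_def
  have hC_nn : 0 ≤ C := by
    have := star_left_conjugate_nonneg hB ai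
    rwa [hai_sa.star_eq] at this
  have hC_u : IsUnit C := (hai_u.mul hB').mul hai_u
  have hCsp : spectrum ℝ C ⊆ Set.Ioi 0 := FurutaAux.spec_pos hC_nn hC_u
  have contR : ∀ r : ℝ, ContinuousOn (fun t : ℝ => t ^ r) (spectrum ℝ C) :=
    fun r => FurutaAux.contOn_rpow hCsp r
  have contL : ContinuousOn Real.log (spectrum ℝ C) := FurutaAux.contOn_log hCsp
  have hBC : B = a * C * a := by
    rw [hC_def]
    calc B = (a * ai) * B * (ai * a) := by rw [h_a_ai, h_ai_a, one_mul, mul_one]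
    _ = a * (ai * B * ai) * a := by simp only [mul_assoc]
  set Cp : H →L[ℂ] H := cfc (fun t : ℝ => t ^ p) C with hCp_def
  set cp2 : H →L[ℂ] H := cfc (fun t : ℝ => t ^ (p/2)) C with hcp2_def
  set cp2i : H →L[ℂ] H := cfc (fun t : ℝ => t ^ (-(p/2))) C with hcp2i_def
  set logC : H →L[ℂ] H := cfc Real.log C with hlogC_def
  have hCp_u : IsUnit Cp := FurutaAux.rpow_isUnit hC_nn hC_u p
  have hcp2_sa : IsSelfAdjoint cp2 := cfc_predicate _ C
  have hcp2i_sa : IsSelfAdjoint cp2i := cfc_predicate _ C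
  have hcp2_u : IsUnit cp2 := FurutaAux.rpow_isUnit hC_nn hC_u (p/2)
  have hcp2i_u : IsUnit cp2i := FurutaAux.rpow_isUnit hC_nn hC_u (-(p/2))
  have hcp2sq : cp2 * cp2 = Cp := by
    rw [hcp2_def, FurutaAux.rpow_mul_rpow hC_nn hC_u, hCp_def]
    have hpe : p/2 + p/2 = p := by ring
    rw [hpe]
  have hcp2isq : cp2i * cp2i = cfc (fun t : ℝ => t ^ (-p)) C := by
    rw [hcp2i_def, FurutaAux.rpow_mul_rpow hC_nn hC_u]
    have hpe : -(p/2) + -(p/2) = -p := by ring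
    rw [hpe]
  have h_cp2_cp2i : cp2 * cp2i = 1 := by
    rw [hcp2_def, hcp2i_def, FurutaAux.rpow_mul_rpow hC_nn hC_u, add_neg_cancel,
      FurutaAux.rpow_zero' hC_nn hC_u]
  have h_cp2i_cp2 : cp2i * cp2 = 1 := by
    rw [hcp2_def, hcp2i_def, FurutaAux.rpow_mul_rpow hC_nn hC_u, neg_add_cancel,
      FurutaAux.rpow_zero' hC_nn hC_u]
  set G : H →L[ℂ] H := a * Cp * a with hG_def
  set w : H →L[ℂ] H := a * cp2 with hw_def
  have hsw : star w = cp2 * a := by rw [hw_def, star_mul, ha_sa.star_eq, hcp2_sa.star_eq]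
  have hGw : G = w * star w := by
    rw [hsw, hG_def, hw_def, ← hcp2sq]
    simp only [mul_assoc]
  have hG_nn : 0 ≤ G := hGw ▸ mul_star_self_nonneg w
  have hG_u : IsUnit G := (ha_u.mul hCp_u).mul ha_u
  have hw_u : IsUnit w := ha_u.mul hcp2_u
  have hsw_u : IsUnit (star w) := hsw ▸ hcp2_u.mul ha_u
  set g : H →L[ℂ] H := cfc Real.sqrt G with hg_def
  have hg_sa : IsSelfAdjoint g := cfc_predicate _ G
  have hg_u : IsUnit g := FurutaAux.sqrt_isUnit hG_nn hG_u
  have hgg : g * g = G := FurutaAux.sqrt_mul_self hG_nn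
  set gi : H →L[ℂ] H := Ring.inverse g with hgi_def
  have hgi_sa : IsSelfAdjoint gi := by
    rw [hgi_def, IsSelfAdjoint, ← Ring.inverse_star, hg_sa.star_eq]
  have h_gi_g : gi * g = 1 := Ring.inverse_mul_cancel g hg_u
  have h_g_gi : g * gi = 1 := Ring.mul_inverse_cancel g hg_u
  have hwi : Ring.inverse w = cp2i * ai := by
    rw [hw_def, myInverse_mul_rev ha_u hcp2_u, hcp2i_def, hai_def,
      ← FurutaAux.rpow_inverse hC_nn hC_u (p/2), hcp2_def]
  have hswi : Ring.inverse (star w) = ai * cp2i := by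
    rw [hsw, myInverse_mul_rev hcp2_u ha_u, hcp2i_def, hai_def,
      ← FurutaAux.rpow_inverse hC_nn hC_u (p/2), hcp2_def]
  set u : H →L[ℂ] H := gi * w with hu_def
  have hsu : star u = star w * gi := by rw [hu_def, star_mul, hgi_sa.star_eq]
  have h_u_su : u * star u = 1 := by
    calc u * star u = gi * (w * star w) * gi := by rw [hu_def, hsu]; simp only [mul_assoc]
    _ = gi * (g * g) * gi := by rw [← hGw, hgg]
    _ = (gi * g) * (g * gi) := by simp only [mul_assoc]
    _ = 1 := by rw [h_gi_g, h_g_gi, one_mul]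
  have h_su_u : star u * u = 1 := by
    have hgigi : gi * gi = Ring.inverse (star w) * Ring.inverse w := by
      rw [hgi_def, ← myInverse_mul_rev hg_u hg_u, hgg, hGw, myInverse_mul_rev hw_u hsw_u]
    calc star u * u = star w * (gi * gi) * w := by rw [hsu, hu_def]; simp only [mul_assoc]
    _ = (star w * Ring.inverse (star w)) * (Ring.inverse w * w) := by
        rw [hgigi]; simp only [mul_assoc]
    _ = 1 := by
        rw [Ring.mul_inverse_cancel _ hsw_u, Ring.inverse_mul_cancel _ hw_u, one_mul]
  have hu_mem : u ∈ unitary (H →L[ℂ] H) := Unitary.mem_iff.mpr ⟨h_su_u, h_u_su⟩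
  set u' : unitary (H →L[ℂ] H) := ⟨u, hu_mem⟩ with hu'_def
  have h_gu : g * u = w := by
    rw [hu_def, ← mul_assoc, h_g_gi, one_mul]
  have h_sug : star u * g = star w := by
    rw [hsu, mul_assoc, h_gi_g, mul_one]
  have hgi_conj : ∀ Y : H →L[ℂ] H,
      gi * Y * gi = u * (Ring.inverse w * Y * Ring.inverse (star w)) * star u := by
    intro Y
    have h1 : u * Ring.inverse w = gi := by
      rw [hu_def, mul_assoc, Ring.mul_inverse_cancel _ hw_u, mul_one]
    have h2 : Ring.inverse (star w) * star u = gi := by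
      rw [hsu, ← mul_assoc, Ring.inverse_mul_cancel _ hsw_u, one_mul]
    calc gi * Y * gi = (u * Ring.inverse w) * Y * (Ring.inverse (star w) * star u) := by
          rw [h1, h2]
    _ = _ := by simp only [mul_assoc]
  -- the common core value
  have hinner : cp2 * logC * cp2 = Cp * logC := by
    rw [hcp2_def, hlogC_def, FurutaAux.rpow_mul_log_mul_rpow hC_nn hC_u (p/2) (p/2)]
    have hpe : p/2 + p/2 = p := by ring
    rw [hpe, cfc_mul (fun t : ℝ => t ^ p) Real.log C (contR p) contL, hCp_def]
  have hD1 : Ring.inverse w * A * Ring.inverse (star w) = cfc (fun t : ℝ => t ^ (-p)) C := by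
    rw [hwi, hswi, ← haa, ← hcp2isq]
    calc (cp2i * ai) * (a * a) * (ai * cp2i)
        = cp2i * ((ai * a) * (a * ai)) * cp2i := by simp only [mul_assoc]
    _ = cp2i * cp2i := by rw [h_ai_a, h_a_ai, one_mul, mul_one]
  have hD2 : Ring.inverse w * B * Ring.inverse (star w) = cfc (fun t : ℝ => t ^ (1 - p)) C := by
    rw [hwi, hswi, hBC]
    calc (cp2i * ai) * (a * C * a) * (ai * cp2i)
        = cp2i * ((ai * a) * C * (a * ai)) * cp2i := by simp only [mul_assoc]
    _ = cp2i * C * cp2i := by rw [h_ai_a, h_a_ai, one_mul, mul_one]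
    _ = cfc (fun t : ℝ => t ^ (1 - p)) C := by
        rw [hcp2i_def, FurutaAux.rpow_mul_self_mul_rpow hC_nn hC_u]
        have hpe : -(p/2) + 1 + -(p/2) = 1 - p := by ring
        rw [hpe]
  have core : ∀ (Y : H →L[ℂ] H) (r : ℝ),
      Ring.inverse w * Y * Ring.inverse (star w) = cfc (fun t : ℝ => t ^ r) C →
      g * cfc Real.log (gi * Y * gi) * g = r • (a * (Cp * logC) * a) := by
    intro Y r hD
    have hD_sa : IsSelfAdjoint (cfc (fun t : ℝ => t ^ r) C) := cfc_predicate _ C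
    have hD_nn : 0 ≤ cfc (fun t : ℝ => t ^ r) C := FurutaAux.rpow_nonneg' hC_nn hC_u r
    have hD_u : IsUnit (cfc (fun t : ℝ => t ^ r) C) := FurutaAux.rpow_isUnit hC_nn hC_u r
    have contD : ContinuousOn Real.log (spectrum ℝ (cfc (fun t : ℝ => t ^ r) C)) :=
      FurutaAux.contOn_log (FurutaAux.spec_pos hD_nn hD_u)
    rw [hgi_conj Y, hD, FurutaAux.cfc_conj hu_mem _ hD_sa Real.log contD,
      FurutaAux.log_rpow hC_nn hC_u r]
    calc g * (u * (r • logC) * star u) * g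
        = (g * u) * (r • logC) * (star u * g) := by simp only [mul_assoc]
    _ = w * (r • logC) * star w := by rw [h_gu, h_sug]
    _ = r • (w * logC * star w) := by rw [mul_smul_comm, smul_mul_assoc]
    _ = r • (a * (cp2 * logC * cp2) * a) := by
        rw [hsw, hw_def]; simp only [mul_assoc]
    _ = r • (a * (Cp * logC) * a) := by rw [hinner]
  constructor
  · rw [core A (-p) hD1, smul_smul]
    have : p⁻¹ * -p = -1 := by field_simp
    rw [this, neg_smul, one_smul, neg_neg]
  · rw [core B (1 - p) hD2, smul_smul]
    have h1p : (1 : ℝ) - p ≠ 0 := by linarith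
    rw [inv_mul_cancel₀ h1p, one_smul]
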